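/- Consider the combinatorial neural code T on the 14 neurons {1,2,3,4,5,6,a,b,c,d,e,f,g,h} with codewords {1,4,a}, {1,5,a,b}, {1,6,b,g}, {2,5,c}, {2,4,c,d}, {2,6,d,g,h}, {3,4,e}, {3,5,e,f}, {3,6,f,h}, {1,a}, {1,b}, {2,c}, {2,d}, {3,e}, {3,f}, {6,g}, {6,h}, {4}, {5}, ∅. Then T is neither open convex nor closed convex: for every d ≥ 1 there is no family of convex open sets in ℝ^d realizing T, and no family of convex closed sets in ℝ^d realizing T. -/

import Mathlib

/-- The atom of a subset `σ` of neurons with respect to a family of sets `U`: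
`A_σ = (⋂_{i ∈ σ} U_i) \ (⋃_{j ∉ σ} U_j)`. -/
def atomOf {n : ℕ} {X : Type*} (U : Fin n → Set X) (σ : Set (Fin n)) : Set X :=
  (⋂ i ∈ σ, U i) \ (⋃ j ∈ σᶜ, U j)

/-- The combinatorial code of a family of sets: the collection of subsets with
nonempty atom. -/
def codeOf {n : ℕ} {X : Type*} (U : Fin n → Set X) : Set (Set (Fin n)) :=
  {σ | (atomOf U σ).Nonempty}

/-- The code `T` on 14 neurons `{1,…,6, a, b, …, h}`, with neurons `1,…,6` encoded as
`0,…,5 : Fin 14` and `a, b, c, d, e, f, g, h` encoded as `6, 7, …, 13 : Fin 14`. -/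
def codeT : Set (Set (Fin 14)) :=
  {{0, 3, 6},           -- 14a
   {0, 4, 6, 7},        -- 15ab
   {0, 5, 7, 12},       -- 16bg
   {1, 4, 8},           -- 25c
   {1, 3, 8, 9},        -- 24cd
   {1, 5, 9, 12, 13},   -- 26dgh
   {2, 3, 10},          -- 34e
   {2, 4, 10, 11},      -- 35ef
   {2, 5, 11, 13},      -- 36fh
   {0, 6},              -- 1a
   {0, 7},              -- 1b
   {1, 8},              -- 2c
   {1, 9},              -- 2d
   {2, 10},             -- 3e
   {2, 11},             -- 3f
   {5, 12},             -- 6g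
   {5, 13},             -- 6h
   {3},                 -- 4
   {4},                 -- 5
   ∅}

section Aux

lemma codeT_cases {σ : Set (Fin 14)} (h : σ ∈ codeT) :
    σ = {0, 3, 6} ∨ σ = {0, 4, 6, 7} ∨ σ = {0, 5, 7, 12} ∨ σ = {1, 4, 8} ∨
    σ = {1, 3, 8, 9} ∨ σ = {1, 5, 9, 12, 13} ∨ σ = {2, 3, 10} ∨ σ = {2, 4, 10, 11} ∨
    σ = {2, 5, 11, 13} ∨ σ = {0, 6} ∨ σ = {0, 7} ∨ σ = {1, 8} ∨ σ = {1, 9} ∨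
    σ = {2, 10} ∨ σ = {2, 11} ∨ σ = {5, 12} ∨ σ = {5, 13} ∨ σ = {3} ∨ σ = {4} ∨ σ = ∅ := by
  simpa [codeT] using h

lemma cT1 {σ : Set (Fin 14)} (h : σ ∈ codeT) (h0 : (0 : Fin 14) ∈ σ) :
    (6 : Fin 14) ∈ σ ∨ (7 : Fin 14) ∈ σ := by
  rcases codeT_cases h with rfl|rfl|rfl|rfl|rfl|rfl|rfl|rfl|rfl|rfl|rfl|rfl|rfl|rfl|rfl|rfl|rfl|rfl|rfl|rfl <;>
    simp_all [Set.mem_insert_iff, Set.mem_singleton_iff]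

lemma cT2 {σ : Set (Fin 14)} (h : σ ∈ codeT) (h0 : (2 : Fin 14) ∈ σ) :
    (10 : Fin 14) ∈ σ ∨ (11 : Fin 14) ∈ σ := by
  rcases codeT_cases h with rfl|rfl|rfl|rfl|rfl|rfl|rfl|rfl|rfl|rfl|rfl|rfl|rfl|rfl|rfl|rfl|rfl|rfl|rfl|rfl <;>
    simp_all [Set.mem_insert_iff, Set.mem_singleton_iff]

lemma cT3 {σ : Set (Fin 14)} (h : σ ∈ codeT) (h0 : (5 : Fin 14) ∈ σ) :
    (12 : Fin 14) ∈ σ ∨ (13 : Fin 14) ∈ σ := by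
  rcases codeT_cases h with rfl|rfl|rfl|rfl|rfl|rfl|rfl|rfl|rfl|rfl|rfl|rfl|rfl|rfl|rfl|rfl|rfl|rfl|rfl|rfl <;>
    simp_all [Set.mem_insert_iff, Set.mem_singleton_iff]

lemma cT4 {σ : Set (Fin 14)} (h : σ ∈ codeT) (h0 : (1 : Fin 14) ∈ σ) :
    (8 : Fin 14) ∈ σ ∨ (9 : Fin 14) ∈ σ := by
  rcases codeT_cases h with rfl|rfl|rfl|rfl|rfl|rfl|rfl|rfl|rfl|rfl|rfl|rfl|rfl|rfl|rfl|rfl|rfl|rfl|rfl|rfl <;>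
    simp_all [Set.mem_insert_iff, Set.mem_singleton_iff]

lemma cT5 {σ : Set (Fin 14)} (h : σ ∈ codeT) (h6 : (6 : Fin 14) ∈ σ) (h7 : (7 : Fin 14) ∈ σ) :
    (4 : Fin 14) ∈ σ := by
  rcases codeT_cases h with rfl|rfl|rfl|rfl|rfl|rfl|rfl|rfl|rfl|rfl|rfl|rfl|rfl|rfl|rfl|rfl|rfl|rfl|rfl|rfl <;>
    simp_all [Set.mem_insert_iff, Set.mem_singleton_iff]

lemma cT6 {σ : Set (Fin 14)} (h : σ ∈ codeT) (h6 : (10 : Fin 14) ∈ σ) (h7 : (11 : Fin 14) ∈ σ) :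
    (4 : Fin 14) ∈ σ := by
  rcases codeT_cases h with rfl|rfl|rfl|rfl|rfl|rfl|rfl|rfl|rfl|rfl|rfl|rfl|rfl|rfl|rfl|rfl|rfl|rfl|rfl|rfl <;>
    simp_all [Set.mem_insert_iff, Set.mem_singleton_iff]

lemma cT7 {σ : Set (Fin 14)} (h : σ ∈ codeT) (h6 : (12 : Fin 14) ∈ σ) (h7 : (13 : Fin 14) ∈ σ) :
    (1 : Fin 14) ∈ σ ∧ (9 : Fin 14) ∈ σ := by
  rcases codeT_cases h with rfl|rfl|rfl|rfl|rfl|rfl|rfl|rfl|rfl|rfl|rfl|rfl|rfl|rfl|rfl|rfl|rfl|rfl|rfl|rfl <;>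
    simp_all [Set.mem_insert_iff, Set.mem_singleton_iff]

lemma cT8 {σ : Set (Fin 14)} (h : σ ∈ codeT) (h6 : (8 : Fin 14) ∈ σ) (h7 : (9 : Fin 14) ∈ σ) :
    (3 : Fin 14) ∈ σ := by
  rcases codeT_cases h with rfl|rfl|rfl|rfl|rfl|rfl|rfl|rfl|rfl|rfl|rfl|rfl|rfl|rfl|rfl|rfl|rfl|rfl|rfl|rfl <;>
    simp_all [Set.mem_insert_iff, Set.mem_singleton_iff]

lemma cT9 {σ : Set (Fin 14)} (h : σ ∈ codeT) (h3 : (3 : Fin 14) ∈ σ) (h4 : (4 : Fin 14) ∈ σ) :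
    False := by
  rcases codeT_cases h with rfl|rfl|rfl|rfl|rfl|rfl|rfl|rfl|rfl|rfl|rfl|rfl|rfl|rfl|rfl|rfl|rfl|rfl|rfl|rfl <;>
    simp_all [Set.mem_insert_iff, Set.mem_singleton_iff]

variable {E : Type*} [NormedAddCommGroup E] [NormedSpace ℝ E]

/-- On a segment covered by two sets which are both open or both closed, with one endpoint
in each, some point lies in both sets. -/
lemma seg_meet {C D : Set E}
    (h : (IsOpen C ∧ IsOpen D) ∨ (IsClosed C ∧ IsClosed D))
    {x y : E} (hx : x ∈ C) (hy : y ∈ D) (hsub : segment ℝ x y ⊆ C ∪ D) :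
    ∃ z ∈ segment ℝ x y, z ∈ C ∧ z ∈ D := by
  have hpre : IsPreconnected (segment ℝ x y) := (convex_segment x y).isPreconnected
  rcases h with ⟨hC, hD⟩ | ⟨hC, hD⟩
  · obtain ⟨z, hz, hzC, hzD⟩ := hpre C D hC hD hsub
      ⟨x, left_mem_segment ℝ x y, hx⟩ ⟨y, right_mem_segment ℝ x y, hy⟩
    exact ⟨z, hz, hzC, hzD⟩
  · obtain ⟨z, hz, hzC, hzD⟩ := isPreconnected_closed_iff.mp hpre C D hC hD hsub
      ⟨x, left_mem_segment ℝ x y, hx⟩ ⟨y, right_mem_segment ℝ x y, hy⟩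
    exact ⟨z, hz, hzC, hzD⟩

lemma arith1 {a b fp fr fz c : ℝ} (ha : 0 ≤ a) (hb : 0 ≤ b) (hab : a + b = 1)
    (hz : a * fp + b * fr = fz) (hfp : fp < c) (hfz : c < fz) : c < fr := by
  by_contra hcon
  push_neg at hcon
  have h1 : a * fp ≤ a * c := mul_le_mul_of_nonneg_left hfp.le ha
  have h2 : b * fr ≤ b * c := mul_le_mul_of_nonneg_left hcon hb
  have h3 : a * c + b * c = c := by rw [← add_mul, hab, one_mul]
  linarith

lemma arith2 {a b f1 f2 fz c : ℝ} (ha : 0 ≤ a) (hb : 0 ≤ b) (hab : a + b = 1)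
    (hz : a * f1 + b * f2 = fz) (h1 : c < f1) (h2 : c < f2) : c < fz := by
  rcases eq_or_lt_of_le ha with hrfl | ha'
  · have hb1 : b = 1 := by linarith
    have : fz = f2 := by rw [← hz, ← hrfl, hb1]; ring
    linarith
  · have k1 : a * c < a * f1 := mul_lt_mul_of_pos_left h1 ha'
    have k2 : b * c ≤ b * f2 := mul_le_mul_of_nonneg_left h2.le hb
    have h3 : a * c + b * c = c := by rw [← add_mul, hab, one_mul]
    linarith

/-- The main nonconvexity argument: no family of convex sets which are all open or
all closed realizes `codeT`. -/
lemma not_realizable (U : Fin 14 → Set E) (hConv : ∀ i, Convex ℝ (U i))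
    (htop : (∀ i, IsOpen (U i)) ∨ (∀ i, IsClosed (U i)))
    (hcode : codeOf U = codeT) : False := by
  -- the codeword of any point belongs to the code
  have hcw : ∀ y : E, {i : Fin 14 | y ∈ U i} ∈ codeT := by
    intro y
    rw [← hcode]
    refine ⟨y, Set.mem_iInter₂.mpr fun i hi => hi, ?_⟩
    intro hmem
    simp only [Set.mem_iUnion, Set.mem_compl_iff, Set.mem_setOf_eq] at hmem
    obtain ⟨j, hj1, hj2⟩ := hmem
    exact hj1 hj2
  -- choose points in prescribed atoms
  have hatom : ∀ σ ∈ codeT, ∃ y : E, ∀ i ∈ σ, y ∈ U i := by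
    intro σ hσ
    have hσ' : σ ∈ codeOf U := by rw [hcode]; exact hσ
    obtain ⟨y, hy⟩ := hσ'
    exact ⟨y, fun i hi => Set.mem_iInter₂.mp hy.1 i hi⟩
  obtain ⟨p, hp⟩ := hatom {0, 3, 6} (by simp [codeT])
  obtain ⟨r, hr⟩ := hatom {0, 5, 7, 12} (by simp [codeT])
  obtain ⟨v, hv⟩ := hatom {2, 3, 10} (by simp [codeT])
  obtain ⟨x, hx⟩ := hatom {2, 5, 11, 13} (by simp [codeT])
  obtain ⟨s, hs⟩ := hatom {1, 4, 8} (by simp [codeT])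
  have hp0 : p ∈ U 0 := hp 0 (by simp)
  have hp3 : p ∈ U 3 := hp 3 (by simp)
  have hp6 : p ∈ U 6 := hp 6 (by simp)
  have hr0 : r ∈ U 0 := hr 0 (by simp)
  have hr5 : r ∈ U 5 := hr 5 (by simp)
  have hr7 : r ∈ U 7 := hr 7 (by simp)
  have hr12 : r ∈ U 12 := hr 12 (by simp)
  have hv2 : v ∈ U 2 := hv 2 (by simp)
  have hv3 : v ∈ U 3 := hv 3 (by simp)
  have hv10 : v ∈ U 10 := hv 10 (by simp)
  have hx2 : x ∈ U 2 := hx 2 (by simp)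
  have hx5 : x ∈ U 5 := hx 5 (by simp)
  have hx11 : x ∈ U 11 := hx 11 (by simp)
  have hx13 : x ∈ U 13 := hx 13 (by simp)
  have hs1 : s ∈ U 1 := hs 1 (by simp)
  have hs4 : s ∈ U 4 := hs 4 (by simp)
  have hs8 : s ∈ U 8 := hs 8 (by simp)
  have htopC : ∀ i j : Fin 14, (IsOpen (U i) ∧ IsOpen (U j)) ∨ (IsClosed (U i) ∧ IsClosed (U j)) := by
    rcases htop with h | h
    · exact fun i j => Or.inl ⟨h i, h j⟩
    · exact fun i j => Or.inr ⟨h i, h j⟩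
  -- z1 on [p,r] lies in U 4 (neuron 5)
  obtain ⟨z1, hz1seg, hz1a, hz1b⟩ := seg_meet (htopC 6 7) hp6 hr7 (by
    intro y hy
    have hy0 : y ∈ U 0 := (hConv 0).segment_subset hp0 hr0 hy
    rcases cT1 (hcw y) hy0 with h | h
    · exact Or.inl h
    · exact Or.inr h)
  have hz14 : z1 ∈ U 4 := cT5 (hcw z1) hz1a hz1b
  -- z3 on [v,x] lies in U 4
  obtain ⟨z3, hz3seg, hz3a, hz3b⟩ := seg_meet (htopC 10 11) hv10 hx11 (by
    intro y hy
    have hy2 : y ∈ U 2 := (hConv 2).segment_subset hv2 hx2 hy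
    rcases cT2 (hcw y) hy2 with h | h
    · exact Or.inl h
    · exact Or.inr h)
  have hz34 : z3 ∈ U 4 := cT6 (hcw z3) hz3a hz3b
  -- z4 on [r,x] lies in U 1 and U 9
  obtain ⟨z4, hz4seg, hz4a, hz4b⟩ := seg_meet (htopC 12 13) hr12 hx13 (by
    intro y hy
    have hy5 : y ∈ U 5 := (hConv 5).segment_subset hr5 hx5 hy
    rcases cT3 (hcw y) hy5 with h | h
    · exact Or.inl h
    · exact Or.inr h)
  have hz41 : z4 ∈ U 1 := (cT7 (hcw z4) hz4a hz4b).1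
  have hz49 : z4 ∈ U 9 := (cT7 (hcw z4) hz4a hz4b).2
  -- w on [s,z4] lies in U 3 (neuron 4)
  obtain ⟨w, hwseg, hwa, hwb⟩ := seg_meet (htopC 8 9) hs8 hz49 (by
    intro y hy
    have hy1 : y ∈ U 1 := (hConv 1).segment_subset hs1 hz41 hy
    rcases cT4 (hcw y) hy1 with h | h
    · exact Or.inl h
    · exact Or.inr h)
  have hw3 : w ∈ U 3 := cT8 (hcw w) hwa hwb
  -- separate conv {p, v, w} ⊆ U 3 from conv {z1, z3, s} ⊆ U 4
  have hK4sub : convexHull ℝ ({p, v, w} : Set E) ⊆ U 3 :=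
    convexHull_min (by
      intro y hy
      rcases hy with rfl | rfl | rfl
      · exact hp3
      · exact hv3
      · exact hw3) (hConv 3)
  have hK5sub : convexHull ℝ ({z1, z3, s} : Set E) ⊆ U 4 :=
    convexHull_min (by
      intro y hy
      rcases hy with rfl | rfl | rfl
      · exact hz14
      · exact hz34
      · exact hs4) (hConv 4)
  have hfin : ({p, v, w} : Set E).Finite :=
    ((Set.finite_singleton w).insert v).insert p
  have hfin' : ({z1, z3, s} : Set E).Finite :=
    ((Set.finite_singleton s).insert z3).insert z1
  have hdisj : Disjoint (convexHull ℝ ({p, v, w} : Set E)) (convexHull ℝ ({z1, z3, s} : Set E)) := by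
    rw [Set.disjoint_left]
    intro y hy4 hy5
    exact cT9 (hcw y) (hK4sub hy4) (hK5sub hy5)
  obtain ⟨f, c1, c2, hf4, hc, hf5⟩ := geometric_hahn_banach_compact_closed
    (convex_convexHull ℝ _) (hfin.isCompact_convexHull ℝ)
    (convex_convexHull ℝ _) (hfin'.isClosed_convexHull ℝ) hdisj
  have hfp : f p < c1 := hf4 p (subset_convexHull ℝ _ (by simp))
  have hfv : f v < c1 := hf4 v (subset_convexHull ℝ _ (by simp))
  have hfw : f w < c1 := hf4 w (subset_convexHull ℝ _ (by simp))
  have hfz1 : c1 < f z1 := lt_trans hc (hf5 z1 (subset_convexHull ℝ _ (by simp)))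
  have hfz3 : c1 < f z3 := lt_trans hc (hf5 z3 (subset_convexHull ℝ _ (by simp)))
  have hfs : c1 < f s := lt_trans hc (hf5 s (subset_convexHull ℝ _ (by simp)))
  -- translate segment memberships into affine combinations
  obtain ⟨a1, b1, ha1, hb1, hab1, hq1⟩ := hz1seg
  obtain ⟨a3, b3, ha3, hb3, hab3, hq3⟩ := hz3seg
  obtain ⟨a4, b4, ha4, hb4, hab4, hq4⟩ := hz4seg
  obtain ⟨aw, bw, haw, hbw, habw, hqw⟩ := hwseg
  have e1 : a1 * f p + b1 * f r = f z1 := by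
    rw [← hq1]; simp [map_add, map_smul, smul_eq_mul]
  have e3 : a3 * f v + b3 * f x = f z3 := by
    rw [← hq3]; simp [map_add, map_smul, smul_eq_mul]
  have e4 : a4 * f r + b4 * f x = f z4 := by
    rw [← hq4]; simp [map_add, map_smul, smul_eq_mul]
  have ew : aw * f s + bw * f z4 = f w := by
    rw [← hqw]; simp [map_add, map_smul, smul_eq_mul]
  have hfr : c1 < f r := arith1 ha1 hb1 hab1 e1 hfp hfz1
  have hfx : c1 < f x := arith1 ha3 hb3 hab3 e3 hfv hfz3
  have hfz4 : c1 < f z4 := arith2 ha4 hb4 hab4 e4 hfr hfx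
  have hfw' : c1 < f w := arith2 haw hbw habw ew hfs hfz4
  exact absurd hfw (not_lt.mpr hfw'.le)

end Aux

/-- The code `T` is neither open convex nor closed convex in any dimension `d ≥ 1`. -/
theorem stmt6 : ∀ d : ℕ, 1 ≤ d →
    (¬ ∃ U : Fin 14 → Set (EuclideanSpace ℝ (Fin d)),
        (∀ i, Convex ℝ (U i)) ∧ (∀ i, IsOpen (U i)) ∧ codeOf U = codeT) ∧
    (¬ ∃ U : Fin 14 → Set (EuclideanSpace ℝ (Fin d)),
        (∀ i, Convex ℝ (U i)) ∧ (∀ i, IsClosed (U i)) ∧ codeOf U = codeT) := by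
  intro d _
  constructor
  · rintro ⟨U, hConv, hOpen, hcode⟩
    exact not_realizable U hConv (Or.inl hOpen) hcode
  · rintro ⟨U, hConv, hClosed, hcode⟩
    exact not_realizable U hConv (Or.inr hClosed) hcode
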